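/- Fix ε > 0 and a sequence τ_n → 0⁺, and for each n let x^{ε,τ_n} be a discretized solution with step τ_n and common initial datum x₀. Then there exist a subsequence (n_k) and a function x^ε : [0,T] → ℝ^d of bounded variation such that x^{ε,τ_{n_k}}(t) → x^ε(t) for every t ∈ [0,T], and Diss_Ψ(x^ε;[0,T]) ≤ E(0,x₀)·e^{λT}. -/

import Mathlib

open Filter MeasureTheory Set
open scoped Topology NNReal

section Setup

variable {X : Type*} [NormedAddCommGroup X] [NormedSpace ℝ X]

/-- The set of partition sums defining the `Ψ`-dissipation of `u` on `[a,b]`: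
sums `∑ Ψ(u(s_i) − u(s_{i−1}))` over finite strictly increasing partitions
`a = s₀ < s₁ < ⋯ < s_n = b`. -/
def dissSums (Ψ : X → ℝ) (u : ℝ → X) (a b : ℝ) : Set ℝ :=
  { S | ∃ (n : ℕ) (σ : Fin (n + 1) → ℝ), StrictMono σ ∧ σ 0 = a ∧ σ (Fin.last n) = b ∧
      S = ∑ i : Fin n, Ψ (u (σ i.succ) - u (σ i.castSucc)) }

/-- The `Ψ`-dissipation `Diss_Ψ(u;[a,b])`. -/
noncomputable def dissTV (Ψ : X → ℝ) (u : ℝ → X) (a b : ℝ) : ℝ :=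
  sSup (dissSums Ψ u a b)

/-- The subdifferential `∂Ψ(0) = {η : ⟨η,v⟩ ≤ Ψ(v) for all v}`. -/
def subdiffZero (Ψ : X → ℝ) : Set (X →L[ℝ] ℝ) :=
  { η | ∀ v, η v ≤ Ψ v }

/-- `inf_{η ∈ ∂Ψ(0)} ‖ξ + η‖_*`, where `‖·‖_*` is the dual (operator) norm. -/
noncomputable def distToSubdiff (Ψ : X → ℝ) (ξ : X →L[ℝ] ℝ) : ℝ :=
  sInf ((fun η => ‖ξ + η‖) '' subdiffZero Ψ)

/-- The cost `Δ_new(t;a,b)`: infimum over Lipschitz paths `γ : [0,1] → X` with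
`γ(0)=a`, `γ(1)=b` of `∫₀¹ Ψ(γ'(s)) + (inf_{z∈∂Ψ(0)} ‖D_xE(t,γ(s))+z‖_*)·‖γ'(s)‖ ds`. -/
noncomputable def deltaNew (DE : ℝ → X → X →L[ℝ] ℝ) (Ψ : X → ℝ) (t : ℝ) (a b : X) : ℝ :=
  sInf { c | ∃ (K : ℝ≥0) (γ : ℝ → X), LipschitzOnWith K γ (Icc 0 1) ∧ γ 0 = a ∧ γ 1 = b ∧
      c = ∫ s in (0:ℝ)..1, (Ψ (deriv γ s) + distToSubdiff Ψ (DE t (γ s)) * ‖deriv γ s‖) }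

/-- The new dissipation `Diss_new(u;[t₁,t₂])`, with prescribed one-sided limit
functions `uL`, `uR`, summing over the jump set the corrections `Δ_new − Ψ`. -/
noncomputable def dissNew (DE : ℝ → X → X →L[ℝ] ℝ) (Ψ : X → ℝ)
    (u uL uR : ℝ → X) (t₁ t₂ : ℝ) : ℝ :=
  dissTV Ψ u t₁ t₂
    + ∑' t : ({ s | ¬ ContinuousAt u s } ∩ Ioo t₁ t₂ : Set ℝ),
        (deltaNew DE Ψ (t : ℝ) (uL (t : ℝ)) (u (t : ℝ)) +
          deltaNew DE Ψ (t : ℝ) (u (t : ℝ)) (uR (t : ℝ))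
          - Ψ (u (t : ℝ) - uL (t : ℝ)) - Ψ (uR (t : ℝ) - u (t : ℝ)))
    + (deltaNew DE Ψ t₁ (u t₁) (uR t₁) - Ψ (uR t₁ - u t₁))
    + (deltaNew DE Ψ t₂ (uL t₂) (u t₂) - Ψ (u t₂ - uL t₂))

/-- `pts` is a discretized solution with initial datum `x₀`, neighborhood size `ε`,
time-step `τ` and `N` steps: `pts 0 = x₀` and each `pts i` minimizes
`x ↦ E(iτ, x) + Ψ(x − pts (i−1))` over the closed ball of radius `ε` around `pts (i−1)`. -/
def IsDiscreteSol (E : ℝ → X → ℝ) (Ψ : X → ℝ) (x₀ : X) (ε τ : ℝ) (N : ℕ)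
    (pts : ℕ → X) : Prop :=
  pts 0 = x₀ ∧ ∀ i : ℕ, 1 ≤ i → i ≤ N →
    ‖pts i - pts (i - 1)‖ ≤ ε ∧
    ∀ x : X, ‖x - pts (i - 1)‖ ≤ ε →
      E ((i : ℝ) * τ) (pts i) + Ψ (pts i - pts (i - 1)) ≤
        E ((i : ℝ) * τ) x + Ψ (x - pts (i - 1))

/-- The piecewise-constant interpolant `x^{ε,τ}`: equal to `pts (i−1)` on
`[(i−1)τ, iτ)` for `i = 1,…,N`, and to `pts N` on `[Nτ, T]`. -/
noncomputable def discInterp (pts : ℕ → X) (τ : ℝ) (N : ℕ) (t : ℝ) : X :=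
  pts (min N ⌊t / τ⌋₊)

end Setup

section Helpers

variable {X : Type*} [NormedAddCommGroup X] [NormedSpace ℝ X]

lemma psi_zero' {Ψ : X → ℝ} (hΨhom : ∀ c : ℝ, 0 ≤ c → ∀ v : X, Ψ (c • v) = c * Ψ v) :
    Ψ 0 = 0 := by
  have := hΨhom 0 le_rfl 0
  simpa using this

lemma psi_subadd' {Ψ : X → ℝ} (hΨconv : ConvexOn ℝ Set.univ Ψ)
    (hΨhom : ∀ c : ℝ, 0 ≤ c → ∀ v : X, Ψ (c • v) = c * Ψ v) (u v : X) :
    Ψ (u + v) ≤ Ψ u + Ψ v := by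
  have h := hΨconv.2 (Set.mem_univ u) (Set.mem_univ v)
    (by norm_num : (0:ℝ) ≤ 1/2) (by norm_num : (0:ℝ) ≤ 1/2) (by norm_num)
  rw [show (1/2:ℝ) • u + (1/2:ℝ) • v = (1/2:ℝ) • (u + v) by rw [smul_add],
    hΨhom _ (by norm_num)] at h
  simp only [smul_eq_mul] at h
  linarith

set_option linter.unusedSectionVars false in
lemma energy_gronwall' {T : ℝ} {E Et : ℝ → X → ℝ} {lam : ℝ}
    (hEnn : ∀ t ∈ Set.Icc (0:ℝ) T, ∀ x : X, 0 ≤ E t x)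
    (hEt : ∀ x : X, ∀ t ∈ Set.Icc (0:ℝ) T,
      HasDerivWithinAt (fun s => E s x) (Et t x) (Set.Icc 0 T) t)
    (hEbound : ∀ s ∈ Set.Icc (0:ℝ) T, ∀ x : X, |Et s x| ≤ lam * E s x)
    (x : X) {s t : ℝ} (hs : 0 ≤ s) (hst : s ≤ t) (ht : t ≤ T) :
    E t x ≤ E s x * Real.exp (lam * (t - s)) := by
  have hsub : Set.Icc s t ⊆ Set.Icc 0 T := Set.Icc_subset_Icc hs ht
  have hcont : ContinuousOn (fun r => E r x) (Set.Icc s t) := fun r hr =>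
    ((hEt x r (hsub hr)).continuousWithinAt).mono hsub
  have key := norm_le_gronwallBound_of_norm_deriv_right_le (f := fun r => E r x)
      (f' := fun r => Et r x) (δ := ‖E s x‖) (K := lam) (ε := 0) (a := s) (b := t)
      hcont ?_ le_rfl ?_ t (Set.right_mem_Icc.2 hst)
  · rw [Real.norm_eq_abs, abs_of_nonneg (hEnn t ⟨hs.trans hst, ht⟩ x),
      gronwallBound_ε0, Real.norm_eq_abs,
      abs_of_nonneg (hEnn s ⟨hs, hst.trans ht⟩ x)] at key
    exact key
  · intro r hr
    have hrT : r ∈ Set.Icc (0:ℝ) T := ⟨hs.trans hr.1, hr.2.le.trans ht⟩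
    have h1 : Set.Icc (0:ℝ) T ∈ nhdsWithin r (Set.Ici r) := by
      have hrT' : r < T := lt_of_lt_of_le hr.2 ht
      filter_upwards [inter_mem (mem_nhdsWithin_of_mem_nhds (Iio_mem_nhds hrT'))
        self_mem_nhdsWithin] with y hy
      exact ⟨hs.trans (hr.1.trans hy.2), hy.1.le⟩
    exact (hEt x r hrT).mono_of_mem_nhdsWithin h1
  · intro r hr
    have hrT : r ∈ Set.Icc (0:ℝ) T := ⟨hs.trans hr.1, hr.2.le.trans ht⟩
    rw [Real.norm_eq_abs, Real.norm_eq_abs, abs_of_nonneg (hEnn r hrT x), add_zero]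
    exact hEbound r hrT x

end Helpers

set_option maxHeartbeats 2000000 in
theorem stmt_5
    {X : Type*} [NormedAddCommGroup X] [NormedSpace ℝ X] [FiniteDimensional ℝ X]
    [Nontrivial X]
    (T : ℝ) (hT : 0 < T)
    (E Et : ℝ → X → ℝ) (DE : ℝ → X → X →L[ℝ] ℝ)
    (hEnn : ∀ t ∈ Set.Icc (0:ℝ) T, ∀ x : X, 0 ≤ E t x)
    (hEt : ∀ x : X, ∀ t ∈ Set.Icc (0:ℝ) T,
      HasDerivWithinAt (fun s => E s x) (Et t x) (Set.Icc 0 T) t)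
    (hDE : ∀ t ∈ Set.Icc (0:ℝ) T, ∀ x : X, HasFDerivAt (fun y => E t y) (DE t x) x)
    (hEtc : ContinuousOn (fun p : ℝ × X => Et p.1 p.2) (Set.Icc 0 T ×ˢ Set.univ))
    (hDEc : ContinuousOn (fun p : ℝ × X => DE p.1 p.2) (Set.Icc 0 T ×ˢ Set.univ))
    (lam : ℝ) (hlam : 0 ≤ lam)
    (hEbound : ∀ s ∈ Set.Icc (0:ℝ) T, ∀ x : X, |Et s x| ≤ lam * E s x)
    (Ψ : X → ℝ) (hΨnn : ∀ v, 0 ≤ Ψ v) (hΨconv : ConvexOn ℝ Set.univ Ψ)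
    (hΨhom : ∀ c : ℝ, 0 ≤ c → ∀ v : X, Ψ (c • v) = c * Ψ v)
    (hΨpos : ∀ v : X, v ≠ 0 → 0 < Ψ v)
    (x₀ : X) (ε : ℝ) (hε : 0 < ε)
    (τ : ℕ → ℝ) (hτpos : ∀ n, 0 < τ n) (hτ0 : Filter.Tendsto τ Filter.atTop (nhds 0))
    (N : ℕ → ℕ) (hNT : ∀ n, (N n : ℝ) * τ n ≤ T ∧ T < ((N n : ℝ) + 1) * τ n)
    (pts : ℕ → ℕ → X) (hsol : ∀ n, IsDiscreteSol E Ψ x₀ ε (τ n) (N n) (pts n)) :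
    ∃ φ : ℕ → ℕ, StrictMono φ ∧ ∃ xe : ℝ → X,
      (∀ t ∈ Set.Icc (0:ℝ) T,
        Filter.Tendsto (fun k => discInterp (pts (φ k)) (τ (φ k)) (N (φ k)) t)
          Filter.atTop (nhds (xe t))) ∧
      BddAbove (dissSums (fun v : X => ‖v‖) xe 0 T) ∧
      ∀ S ∈ dissSums Ψ xe 0 T, S ≤ E 0 x₀ * Real.exp (lam * T) := by
  classical
  -- continuity of Ψ
  have hΨcont : Continuous Ψ :=
    continuousOn_univ.1 (hΨconv.continuousOn isOpen_univ)
  -- coercivity constant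
  obtain ⟨v₀, hv₀, hv₀min⟩ := (isCompact_sphere (0:X) 1).exists_isMinOn
    (NormedSpace.sphere_nonempty.2 zero_le_one) hΨcont.continuousOn
  set c : ℝ := Ψ v₀ with hc_def
  have hv₀ne : v₀ ≠ 0 := by
    intro h
    have := mem_sphere_zero_iff_norm.1 hv₀
    rw [h, norm_zero] at this
    norm_num at this
  have hcpos : 0 < c := hΨpos v₀ hv₀ne
  have hcΨ : ∀ v : X, c * ‖v‖ ≤ Ψ v := by
    intro v
    rcases eq_or_ne v 0 with rfl | hv
    · simp [psi_zero' hΨhom]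
    · have h1 : ‖(‖v‖⁻¹ : ℝ) • v‖ = 1 := norm_smul_inv_norm (𝕜 := ℝ) hv
      have h2 : c ≤ Ψ ((‖v‖⁻¹ : ℝ) • v) :=
        isMinOn_iff.1 hv₀min _ (by rwa [mem_sphere_zero_iff_norm])
      calc c * ‖v‖ = ‖v‖ * c := mul_comm _ _
        _ ≤ ‖v‖ * Ψ ((‖v‖⁻¹:ℝ) • v) := mul_le_mul_of_nonneg_left h2 (norm_nonneg v)
        _ = Ψ (‖v‖ • ((‖v‖⁻¹:ℝ) • v)) := (hΨhom _ (norm_nonneg v) _).symm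
        _ = Ψ v := by rw [smul_smul, mul_inv_cancel₀ (norm_ne_zero_iff.2 hv), one_smul]
  set M : ℝ := E 0 x₀ * Real.exp (lam * T) with hM_def
  have hM0 : 0 ≤ M := mul_nonneg (hEnn 0 ⟨le_rfl, hT.le⟩ x₀) (Real.exp_pos _).le
  -- interpolants and index functions
  set xfun : ℕ → ℝ → X := fun n t => discInterp (pts n) (τ n) (N n) t with hxfun_def
  set jdx : ℕ → ℝ → ℕ := fun n t => min (N n) ⌊t / τ n⌋₊ with hjdx_def
  have hxj : ∀ n t, xfun n t = pts n (jdx n t) := fun n t => rfl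
  set W : ℕ → ℕ → ℝ := fun n j => ∑ i ∈ Finset.range j, Ψ (pts n (i+1) - pts n i)
    with hW_def
  have hW0 : ∀ n j, 0 ≤ W n j := fun n j => Finset.sum_nonneg fun i _ => hΨnn _
  have hWmono : ∀ n, Monotone (W n) := by
    intro n a b hab
    exact Finset.sum_le_sum_of_subset_of_nonneg (Finset.range_subset_range.2 hab)
      (fun i _ _ => hΨnn _)
  have htime : ∀ n (j:ℕ), j ≤ N n → (j:ℝ) * τ n ≤ T := by
    intro n j hj
    calc (j:ℝ) * τ n ≤ (N n : ℝ) * τ n :=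
          mul_le_mul_of_nonneg_right (Nat.cast_le.2 hj) (hτpos n).le
      _ ≤ T := (hNT n).1
  -- the key discrete energy estimate
  have hF1 : ∀ n (j:ℕ), j ≤ N n →
      E ((j:ℝ) * τ n) (pts n j) * Real.exp (lam * (T - (j:ℝ) * τ n)) + W n j ≤ M := by
    intro n j
    induction j with
    | zero =>
      intro _
      have hw : W n 0 = 0 := by simp [hW_def]
      rw [hw, add_zero]
      simp only [Nat.cast_zero, zero_mul, sub_zero, (hsol n).1]
      exact le_of_eq hM_def.symm
    | succ j ih =>
      intro hj
      have hjN : j ≤ N n := Nat.le_of_succ_le hj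
      have ihh := ih hjN
      have htj : (j:ℝ) * τ n ≤ T := htime n j hjN
      have htj1 : ((j:ℝ)+1) * τ n ≤ T := by
        have := htime n (j+1) hj
        push_cast at this
        linarith
      have htj0 : (0:ℝ) ≤ (j:ℝ) * τ n := mul_nonneg (Nat.cast_nonneg j) (hτpos n).le
      have htj10 : (0:ℝ) ≤ ((j:ℝ)+1) * τ n := mul_nonneg (by positivity) (hτpos n).le
      -- minimality against the previous point
      have hmin := ((hsol n).2 (j+1) (Nat.le_add_left 1 j) hj).2 (pts n j)
        (by simp only [Nat.add_sub_cancel, sub_self, norm_zero]; exact hε.le)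
      simp only [Nat.add_sub_cancel, sub_self, psi_zero' hΨhom, add_zero] at hmin
      push_cast at hmin
      -- Gronwall step
      have hg : E (((j:ℝ)+1) * τ n) (pts n j)
          ≤ E ((j:ℝ) * τ n) (pts n j) * Real.exp (lam * (((j:ℝ)+1) * τ n - (j:ℝ) * τ n)) :=
        energy_gronwall' hEnn hEt hEbound (pts n j) htj0
          (by nlinarith [(hτpos n).le]) htj1
      have hA : 0 ≤ E (((j:ℝ)+1) * τ n) (pts n (j+1)) := hEnn _ ⟨htj10, htj1⟩ _
      have hB : 0 ≤ E ((j:ℝ) * τ n) (pts n j) := hEnn _ ⟨htj0, htj1.trans' (by nlinarith [(hτpos n).le])⟩ _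
      have he1 : 1 ≤ Real.exp (lam * (T - ((j:ℝ)+1) * τ n)) :=
        Real.one_le_exp (by nlinarith)
      have hΔ : 0 ≤ Ψ (pts n (j+1) - pts n j) := hΨnn _
      have hWs : W n (j+1) = W n j + Ψ (pts n (j+1) - pts n j) := Finset.sum_range_succ _ _
      have hexp : Real.exp (lam * (((j:ℝ)+1) * τ n - (j:ℝ) * τ n))
          * Real.exp (lam * (T - ((j:ℝ)+1) * τ n)) = Real.exp (lam * (T - (j:ℝ) * τ n)) := by
        rw [← Real.exp_add]
        congr 1
        ring
      set e1 := Real.exp (lam * (T - ((j:ℝ)+1) * τ n)) with he1_def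
      have he1pos : 0 < e1 := Real.exp_pos _
      have step : E (((j:ℝ)+1) * τ n) (pts n (j+1)) * e1 + Ψ (pts n (j+1) - pts n j)
          ≤ E ((j:ℝ) * τ n) (pts n j) * Real.exp (lam * (T - (j:ℝ) * τ n)) := by
        have s1 : E (((j:ℝ)+1) * τ n) (pts n (j+1)) * e1 + Ψ (pts n (j+1) - pts n j)
            ≤ (E (((j:ℝ)+1) * τ n) (pts n (j+1)) + Ψ (pts n (j+1) - pts n j)) * e1 := by
          nlinarith
        have s2 : (E (((j:ℝ)+1) * τ n) (pts n (j+1)) + Ψ (pts n (j+1) - pts n j)) * e1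
            ≤ E (((j:ℝ)+1) * τ n) (pts n j) * e1 :=
          mul_le_mul_of_nonneg_right hmin he1pos.le
        have s3 : E (((j:ℝ)+1) * τ n) (pts n j) * e1
            ≤ E ((j:ℝ) * τ n) (pts n j)
              * Real.exp (lam * (((j:ℝ)+1) * τ n - (j:ℝ) * τ n)) * e1 :=
          mul_le_mul_of_nonneg_right hg he1pos.le
        calc E (((j:ℝ)+1) * τ n) (pts n (j+1)) * e1 + Ψ (pts n (j+1) - pts n j)
            ≤ E (((j:ℝ)+1) * τ n) (pts n j) * e1 := s1.trans s2
          _ ≤ E ((j:ℝ) * τ n) (pts n j)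
              * Real.exp (lam * (((j:ℝ)+1) * τ n - (j:ℝ) * τ n)) * e1 := s3
          _ = E ((j:ℝ) * τ n) (pts n j) * Real.exp (lam * (T - (j:ℝ) * τ n)) := by
              rw [mul_assoc, hexp]
      push_cast
      rw [hWs]
      linarith
  -- telescoping subadditivity
  have hF3 : ∀ n (a b : ℕ), a ≤ b → Ψ (pts n b - pts n a) + W n a ≤ W n b := by
    intro n a b hab
    induction b, hab using Nat.le_induction with
    | base => simp [psi_zero' hΨhom]
    | succ b hab ih =>
      have h1 : Ψ (pts n (b+1) - pts n a)
          ≤ Ψ (pts n (b+1) - pts n b) + Ψ (pts n b - pts n a) := by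
        have := psi_subadd' hΨconv hΨhom (pts n (b+1) - pts n b) (pts n b - pts n a)
        simpa [sub_add_sub_cancel] using this
      have h2 : W n (b+1) = W n b + Ψ (pts n (b+1) - pts n b) := Finset.sum_range_succ _ _
      linarith
  have hF4 : ∀ n (k : ℕ) (m : ℕ → ℕ), Monotone m →
      ∑ i ∈ Finset.range k, Ψ (pts n (m (i+1)) - pts n (m i)) ≤ W n (m k) - W n (m 0) := by
    intro n k m hm
    calc ∑ i ∈ Finset.range k, Ψ (pts n (m (i+1)) - pts n (m i))
        ≤ ∑ i ∈ Finset.range k, (W n (m (i+1)) - W n (m i)) := by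
          refine Finset.sum_le_sum fun i _ => ?_
          have := hF3 n (m i) (m (i+1)) (hm (Nat.le_succ i))
          linarith
      _ = W n (m k) - W n (m 0) := Finset.sum_range_sub (fun i => W n (m i)) k
  -- index monotonicity
  have hjmono : ∀ n, Monotone (jdx n) := by
    intro n s t hst
    refine min_le_min le_rfl (Nat.floor_mono ?_)
    exact (div_le_div_iff_of_pos_right (hτpos n)).2 hst
  have hjN : ∀ n (t:ℝ), jdx n t ≤ N n := fun n t => min_le_left _ _
  have hj0 : ∀ n, jdx n 0 = 0 := by intro n; simp [hjdx_def]
  have hx0 : ∀ n, xfun n 0 = x₀ := by intro n; rw [hxj, hj0, (hsol n).1]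
  -- key Lipschitz-type estimate along the interpolant
  have hK1 : ∀ n (s t : ℝ), s ≤ t →
      c * ‖xfun n t - xfun n s‖ ≤ W n (jdx n t) - W n (jdx n s) := by
    intro n s t hst
    have h1 := hF3 n (jdx n s) (jdx n t) (hjmono n hst)
    have h2 := hcΨ (pts n (jdx n t) - pts n (jdx n s))
    rw [hxj, hxj]
    linarith
  have hK2 : ∀ n (t:ℝ), W n (jdx n t) ≤ M := by
    intro n t
    have h1 := hF1 n (jdx n t) (hjN n t)
    have h2 : 0 ≤ E ((jdx n t : ℝ) * τ n) (pts n (jdx n t)) :=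
      hEnn _ ⟨mul_nonneg (Nat.cast_nonneg _) (hτpos n).le, htime n _ (hjN n t)⟩ _
    nlinarith [Real.exp_pos (lam * (T - (jdx n t : ℝ) * τ n))]
  have hK3 : ∀ n (t:ℝ), 0 ≤ t → ‖xfun n t - x₀‖ ≤ M / c := by
    intro n t ht
    have h := hK1 n 0 t ht
    rw [hx0 n] at h
    have h0 : 0 ≤ W n (jdx n 0) := hW0 _ _
    have h2 := hK2 n t
    rw [le_div_iff₀ hcpos]
    nlinarith
  -- countable dense-ish set D
  set D : Set ℝ :=
    insert 0 (insert T {t : ℝ | t ∈ Set.Icc (0:ℝ) T ∧ ∃ q : ℚ, (q:ℝ) = t}) with hD_def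
  have h0D : (0:ℝ) ∈ D := Set.mem_insert _ _
  have hTD : T ∈ D := Set.mem_insert_of_mem _ (Set.mem_insert _ _)
  have hratD : ∀ t : ℝ, 0 ≤ t → t ≤ T → (∃ q : ℚ, (q:ℝ) = t) → t ∈ D := fun t h1 h2 h3 =>
    Set.mem_insert_of_mem _ (Set.mem_insert_of_mem _ ⟨⟨h1, h2⟩, h3⟩)
  have hDsub : D ⊆ Set.Icc 0 T := by
    intro t ht
    simp only [hD_def, Set.mem_insert_iff, Set.mem_setOf_eq] at ht
    rcases ht with rfl | rfl | ⟨h, _⟩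
    · exact ⟨le_rfl, hT.le⟩
    · exact ⟨hT.le, le_rfl⟩
    · exact h
  have hDcnt : D.Countable := by
    refine Set.Countable.insert _ (Set.Countable.insert _ ?_)
    refine (Set.countable_range ((↑) : ℚ → ℝ)).mono ?_
    rintro t ⟨_, q, hq⟩
    exact ⟨q, hq⟩
  haveI : Countable ↥D := hDcnt.to_subtype
  -- first extraction: convergence on D of values and variations
  have hKcomp : IsCompact ((Metric.closedBall x₀ (M/c)) ×ˢ (Set.Icc (0:ℝ) M)) :=
    (isCompact_closedBall x₀ (M/c)).prod isCompact_Icc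
  have hScomp : IsCompact (Set.pi Set.univ
      (fun _ : ↥D => (Metric.closedBall x₀ (M/c)) ×ˢ (Set.Icc (0:ℝ) M))) :=
    isCompact_univ_pi fun _ => hKcomp
  set G : ℕ → (↥D → X × ℝ) := fun n q => (xfun n q, W n (jdx n q)) with hG_def
  have hGmem : ∀ n, G n ∈ Set.pi Set.univ
      (fun _ : ↥D => (Metric.closedBall x₀ (M/c)) ×ˢ (Set.Icc (0:ℝ) M)) := by
    intro n
    rw [Set.mem_univ_pi]
    intro q
    refine ⟨?_, hW0 _ _, hK2 n q⟩
    rw [Metric.mem_closedBall, dist_eq_norm]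
    exact hK3 n q (hDsub q.2).1
  obtain ⟨Ginf, hGinfmem, φ₁, hφ₁, hGinf⟩ := hScomp.tendsto_subseq hGmem
  have hGpt : ∀ q : ↥D, Tendsto (fun k => G (φ₁ k) q) atTop (𝓝 (Ginf q)) :=
    fun q => tendsto_pi_nhds.1 hGinf q
  set g : ↥D → X := fun q => (Ginf q).1 with hg_def
  set Wl : ↥D → ℝ := fun q => (Ginf q).2 with hWl_def
  have hgpt : ∀ q : ↥D, Tendsto (fun k => xfun (φ₁ k) q) atTop (𝓝 (g q)) :=
    fun q => (continuous_fst.tendsto _).comp (hGpt q)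
  have hWpt : ∀ q : ↥D, Tendsto (fun k => W (φ₁ k) (jdx (φ₁ k) q)) atTop (𝓝 (Wl q)) :=
    fun q => (continuous_snd.tendsto _).comp (hGpt q)
  have hWlmono : ∀ q q' : ↥D, (q:ℝ) ≤ (q':ℝ) → Wl q ≤ Wl q' := by
    intro q q' hqq
    exact le_of_tendsto_of_tendsto' (hWpt q) (hWpt q')
      (fun k => hWmono _ (hjmono _ hqq))
  have hWlnn : ∀ q : ↥D, 0 ≤ Wl q :=
    fun q => le_of_tendsto_of_tendsto' tendsto_const_nhds (hWpt q) (fun k => hW0 _ _)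
  have hWlM : ∀ q : ↥D, Wl q ≤ M :=
    fun q => le_of_tendsto_of_tendsto' (hWpt q) tendsto_const_nhds (fun k => hK2 _ _)
  -- the limit variation function
  haveI hDne : Nonempty ↥D := ⟨⟨0, h0D⟩⟩
  set h : ℝ → ℝ := fun t => ⨆ q : ↥D, (if (q:ℝ) ≤ t then Wl q else 0) with hh_def
  have hbdd : ∀ t : ℝ, BddAbove (Set.range fun q : ↥D => (if (q:ℝ) ≤ t then Wl q else 0)) := by
    intro t
    refine ⟨M, ?_⟩
    rintro y ⟨q, rfl⟩
    dsimp only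
    split
    · exact hWlM q
    · exact hM0
  have hhmono : Monotone h := by
    intro t1 t2 h12
    refine ciSup_le fun q => ?_
    by_cases hq : (q:ℝ) ≤ t1
    · rw [if_pos hq]
      have := le_ciSup (hbdd t2) q
      rwa [if_pos (hq.trans h12)] at this
    · rw [if_neg hq]
      refine le_trans ?_ (le_ciSup (hbdd t2) ⟨0, h0D⟩)
      split
      · exact hWlnn _
      · exact le_rfl
  have hWlh : ∀ q : ↥D, h (q:ℝ) = Wl q := by
    intro q
    apply le_antisymm
    · refine ciSup_le fun q' => ?_
      by_cases hq' : (q':ℝ) ≤ (q:ℝ)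
      · rw [if_pos hq']; exact hWlmono _ _ hq'
      · rw [if_neg hq']; exact hWlnn q
    · have := le_ciSup (hbdd (q:ℝ)) q
      rwa [if_pos le_rfl] at this
  -- bad set
  set B : Set ℝ := {t : ℝ | ¬ContinuousAt h t} ∩ Set.Icc 0 T with hB_def
  have hBcnt : B.Countable :=
    (hhmono.countable_not_continuousAt).mono Set.inter_subset_left
  haveI : Countable ↥B := hBcnt.to_subtype
  -- second extraction on B
  have hS2comp : IsCompact (Set.pi Set.univ
      (fun _ : ↥B => Metric.closedBall x₀ (M/c))) :=
    isCompact_univ_pi fun _ => isCompact_closedBall _ _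
  set G2 : ℕ → (↥B → X) := fun k q => xfun (φ₁ k) q with hG2_def
  have hG2mem : ∀ k, G2 k ∈ Set.pi Set.univ
      (fun _ : ↥B => Metric.closedBall x₀ (M/c)) := by
    intro k
    rw [Set.mem_univ_pi]
    intro q
    rw [Metric.mem_closedBall, dist_eq_norm]
    exact hK3 _ _ q.2.2.1
  obtain ⟨g2, hg2mem, φ₂, hφ₂, hg2⟩ := hS2comp.tendsto_subseq hG2mem
  have hg2pt : ∀ q : ↥B, Tendsto (fun k => xfun (φ₁ (φ₂ k)) q) atTop (𝓝 (g2 q)) :=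
    fun q => tendsto_pi_nhds.1 hg2 q
  set φ : ℕ → ℕ := φ₁ ∘ φ₂ with hφ_def
  have hφmono : StrictMono φ := hφ₁.comp hφ₂
  have hφ₂top : Tendsto φ₂ atTop atTop := hφ₂.tendsto_atTop
  have hgpt' : ∀ q : ↥D, Tendsto (fun k => xfun (φ k) q) atTop (𝓝 (g q)) :=
    fun q => (hgpt q).comp hφ₂top
  have hWpt' : ∀ q : ↥D, Tendsto (fun k => W (φ k) (jdx (φ k) q)) atTop (𝓝 (Wl q)) :=
    fun q => (hWpt q).comp hφ₂top
  -- pointwise convergence everywhere on [0,T]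
  have hexists : ∀ t ∈ Set.Icc (0:ℝ) T,
      ∃ L, Tendsto (fun k => xfun (φ k) t) atTop (𝓝 L) := by
    intro t ht
    by_cases htD : t ∈ D
    · exact ⟨g ⟨t, htD⟩, hgpt' ⟨t, htD⟩⟩
    by_cases htB : ¬ContinuousAt h t
    · exact ⟨g2 ⟨t, ⟨htB, ht⟩⟩, hg2pt ⟨t, ⟨htB, ht⟩⟩⟩
    push_neg at htB
    have ht0 : 0 < t := lt_of_le_of_ne ht.1 (by rintro rfl; exact htD h0D)
    have htT : t < T := lt_of_le_of_ne ht.2 (by rintro rfl; exact htD hTD)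
    have hcauchy : CauchySeq (fun k => xfun (φ k) t) := by
      rw [Metric.cauchySeq_iff]
      intro δ hδ
      obtain ⟨η, hη, hcont⟩ := Metric.continuousAt_iff.1 htB (c * δ / 8) (by positivity)
      obtain ⟨q1, hq1l, hq1r⟩ := exists_rat_btwn (show max 0 (t - η) < t by
        rw [max_lt_iff]; exact ⟨ht0, by linarith⟩)
      obtain ⟨q2, hq2l, hq2r⟩ := exists_rat_btwn (show t < min T (t + η) by
        rw [lt_min_iff]; exact ⟨htT, by linarith⟩)
      have hq10 : (0:ℝ) ≤ q1 := le_of_lt (lt_of_le_of_lt (le_max_left _ _) hq1l)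
      have hq1T : (q1:ℝ) ≤ T := le_of_lt (hq1r.trans htT)
      have hq20 : (0:ℝ) ≤ q2 := ht.1.trans hq2l.le
      have hq2T : (q2:ℝ) ≤ T := (hq2r.trans_le (min_le_left _ _)).le
      set Q1 : ↥D := ⟨(q1:ℝ), hratD _ hq10 hq1T ⟨q1, rfl⟩⟩ with hQ1_def
      set Q2 : ↥D := ⟨(q2:ℝ), hratD _ hq20 hq2T ⟨q2, rfl⟩⟩ with hQ2_def
      have hd1 : dist ((q1:ℝ)) t < η := by
        rw [Real.dist_eq, abs_of_nonpos (by linarith)]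
        have := lt_of_le_of_lt (le_max_right 0 (t - η)) hq1l
        linarith
      have hd2 : dist ((q2:ℝ)) t < η := by
        rw [Real.dist_eq, abs_of_nonneg (by linarith)]
        have := hq2r.trans_le (min_le_right T (t + η))
        linarith
      have hWgap : Wl Q2 - Wl Q1 < c * δ / 4 := by
        have h1 := hcont hd1
        have h2 := hcont hd2
        rw [Real.dist_eq] at h1 h2
        have e1 : h ((q1:ℝ)) = Wl Q1 := hWlh Q1
        have e2 : h ((q2:ℝ)) = Wl Q2 := hWlh Q2
        rw [e1] at h1
        rw [e2] at h2
        have h1' := abs_lt.1 h1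
        have h2' := abs_lt.1 h2
        obtain ⟨h1a, h1b⟩ := h1'
        obtain ⟨h2a, h2b⟩ := h2'
        linarith
      have hVev : ∀ᶠ k in atTop,
          W (φ k) (jdx (φ k) (q2:ℝ)) - W (φ k) (jdx (φ k) (q1:ℝ)) < c * δ / 4 :=
        ((hWpt' Q2).sub (hWpt' Q1)).eventually_lt_const hWgap
      obtain ⟨K2, hK2'⟩ := Metric.cauchySeq_iff.1 (hgpt' Q1).cauchySeq (δ/4) (by linarith)
      obtain ⟨K3, hK3'⟩ := Filter.eventually_atTop.1 hVev
      refine ⟨max K2 K3, fun m hm l hl => ?_⟩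
      have hbnd : ∀ a : ℕ, K3 ≤ a → dist (xfun (φ a) t) (xfun (φ a) (q1:ℝ)) < δ/4 := by
        intro a ha
        have h1 := hK1 (φ a) (q1:ℝ) t hq1r.le
        have h2 : W (φ a) (jdx (φ a) t) ≤ W (φ a) (jdx (φ a) (q2:ℝ)) :=
          hWmono _ (hjmono _ hq2l.le)
        have h3 := hK3' a ha
        rw [dist_eq_norm]
        have h4 : c * ‖xfun (φ a) t - xfun (φ a) (q1:ℝ)‖ < c * (δ/4) := by linarith
        exact (mul_lt_mul_iff_right₀ hcpos).1 h4
      calc dist (xfun (φ m) t) (xfun (φ l) t)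
          ≤ dist (xfun (φ m) t) (xfun (φ m) (q1:ℝ))
            + dist (xfun (φ m) (q1:ℝ)) (xfun (φ l) (q1:ℝ))
            + dist (xfun (φ l) (q1:ℝ)) (xfun (φ l) t) := dist_triangle4 _ _ _ _
        _ < δ/4 + δ/4 + δ/4 := by
            have b1 := hbnd m (le_trans (le_max_right _ _) hm)
            have b2 := hK2' m (le_trans (le_max_left _ _) hm) l (le_trans (le_max_left _ _) hl)
            have b3 := hbnd l (le_trans (le_max_right _ _) hl)
            rw [dist_comm] at b3
            linarith [b1, b2, b3]
        _ < δ := by linarith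
    exact cauchySeq_tendsto_of_complete hcauchy
  -- the limit function
  have hxe0 : ∀ t : ℝ, ∃ L : X, t ∈ Set.Icc (0:ℝ) T →
      Tendsto (fun k => xfun (φ k) t) atTop (𝓝 L) := by
    intro t
    by_cases ht : t ∈ Set.Icc (0:ℝ) T
    · obtain ⟨L, hL⟩ := hexists t ht
      exact ⟨L, fun _ => hL⟩
    · exact ⟨x₀, fun hmem => absurd hmem ht⟩
  choose xe hxe using hxe0
  have hΨbound : ∀ S ∈ dissSums Ψ xe 0 T, S ≤ M := by
    rintro S ⟨n, σ, hσmono, hσ0, hσT, rfl⟩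
    have hσmem : ∀ i : Fin (n+1), σ i ∈ Set.Icc (0:ℝ) T := by
      intro i
      constructor
      · rw [← hσ0]; exact hσmono.monotone (Fin.zero_le i)
      · rw [← hσT]; exact hσmono.monotone (Fin.le_last i)
    have hlim : Tendsto
        (fun k => ∑ i : Fin n, Ψ (xfun (φ k) (σ i.succ) - xfun (φ k) (σ i.castSucc)))
        atTop (𝓝 (∑ i : Fin n, Ψ (xe (σ i.succ) - xe (σ i.castSucc)))) := by
      refine tendsto_finset_sum _ fun i _ => ?_
      exact (hΨcont.tendsto _).comp
        ((hxe _ (hσmem i.succ)).sub (hxe _ (hσmem i.castSucc)))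
    refine le_of_tendsto hlim (Filter.Eventually.of_forall fun k => ?_)
    set m : ℕ → ℕ := fun i =>
      jdx (φ k) (σ ⟨min i n, Nat.lt_succ_of_le (min_le_right i n)⟩) with hm_def
    have hmmono : Monotone m := by
      intro a b hab
      exact hjmono _ (hσmono.monotone (Fin.mk_le_mk.2 (min_le_min hab le_rfl)))
    have hsumeq : ∑ i : Fin n, Ψ (xfun (φ k) (σ i.succ) - xfun (φ k) (σ i.castSucc))
        = ∑ i ∈ Finset.range n, Ψ (pts (φ k) (m (i+1)) - pts (φ k) (m i)) := by
      rw [← Fin.sum_univ_eq_sum_range]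
      refine Finset.sum_congr rfl fun i _ => ?_
      have e1 : (⟨min ((i:ℕ)+1) n, Nat.lt_succ_of_le (min_le_right _ _)⟩ : Fin (n+1))
          = i.succ := by
        apply Fin.ext
        simp [Nat.min_eq_left (Nat.succ_le_of_lt i.isLt)]
      have e2 : (⟨min (i:ℕ) n, Nat.lt_succ_of_le (min_le_right _ _)⟩ : Fin (n+1))
          = i.castSucc := by
        apply Fin.ext
        simp [Nat.min_eq_left (le_of_lt i.isLt)]
      rw [hxj, hxj, hm_def]
      simp only [e1, e2]
    have hle := hF4 (φ k) n m hmmono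
    have hMn : W (φ k) (m n) ≤ M :=
      hK2 (φ k) (σ ⟨min n n, Nat.lt_succ_of_le (min_le_right n n)⟩)
    have h0 : 0 ≤ W (φ k) (m 0) := hW0 _ _
    rw [hsumeq]
    linarith
  refine ⟨φ, hφmono, xe, fun t ht => hxe t ht, ⟨M / c, ?_⟩, hΨbound⟩
  rintro S ⟨n, σ, hσmono, hσ0, hσT, rfl⟩
  dsimp only
  have h1 : ∑ i : Fin n, Ψ (xe (σ i.succ) - xe (σ i.castSucc)) ≤ M :=
    hΨbound _ ⟨n, σ, hσmono, hσ0, hσT, rfl⟩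
  have h2 : c * ∑ i : Fin n, ‖xe (σ i.succ) - xe (σ i.castSucc)‖
      ≤ ∑ i : Fin n, Ψ (xe (σ i.succ) - xe (σ i.castSucc)) := by
    rw [Finset.mul_sum]
    exact Finset.sum_le_sum fun i _ => hcΨ _
  rw [le_div_iff₀ hcpos]
  nlinarith
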